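/- Let D(S) be strongly connected. The vertex set of the polytope P(S) = {u ∈ R^{|S|} : B(D(S))u = 0, 1^T u = 1, u ≥ 0} is exactly {χ(C)/|C| : C is a directed cycle in D(S)}, where χ(C) is the 0-1 incidence vector of the arcs of C and |C| its length. -/

import Mathlib

/-- Prefix of length `L` of an `(L+1)`-gram. -/
def pre (q L : ℕ) (z : Fin (L + 1) → Fin q) : Fin L → Fin q := fun i => z i.castSucc

/-- Suffix of length `L` of an `(L+1)`-gram. -/
def suf (q L : ℕ) (z : Fin (L + 1) → Fin q) : Fin L → Fin q := fun i => z i.succ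

/-- Node set of the restricted de Bruijn graph. -/
def VS (q L : ℕ) (S : Finset (Fin (L + 1) → Fin q)) : Finset (Fin L → Fin q) :=
  S.image (pre q L) ∪ S.image (suf q L)

/-- Arc relation of `D(S)`. -/
def step (q L : ℕ) (S : Finset (Fin (L + 1) → Fin q)) (a b : Fin L → Fin q) : Prop :=
  ∃ z ∈ S, pre q L z = a ∧ suf q L z = b

/-- The polytope `P(S) = {u : B(D(S))u = 0, 1ᵀu = 1, u ≥ 0}`. -/
def PS (q L : ℕ) (S : Finset (Fin (L + 1) → Fin q)) : Set ({z // z ∈ S} → ℝ) :=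
  {u | (∀ v : Fin L → Fin q,
          ∑ z : {z // z ∈ S},
            ((if suf q L z.1 = v then (1 : ℝ) else 0) -
              (if pre q L z.1 = v then 1 else 0)) * u z = 0) ∧
       (∑ z : {z // z ∈ S}, u z = 1) ∧ ∀ z, 0 ≤ u z}

/-- A directed cycle in `D(S)`: a nonempty closed walk, given as the list of
its arcs, whose visited nodes are pairwise distinct (loops are cycles of
length one). -/
def IsCycle (q L : ℕ) (S : Finset (Fin (L + 1) → Fin q))
    (c : List {z // z ∈ S}) : Prop :=
  c ≠ [] ∧
  List.Chain' (fun a b => suf q L a.1 = pre q L b.1) c ∧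
  (∀ h : c ≠ [], suf q L (c.getLast h).1 = pre q L (c.head h).1) ∧
  (c.map (fun z => pre q L z.1)).Nodup

lemma sum_if_count {α : Type*} [Fintype α] [DecidableEq α] [BEq α] [LawfulBEq α] (p : α → Prop) [DecidablePred p]
    (c : List α) :
    ∑ z : α, (if p z then (1:ℝ) else 0) * (c.count z : ℝ)
      = (c.countP (fun z => decide (p z)) : ℝ) := by
  induction c with
  | nil => simp
  | cons a t ih =>
    have h : ∀ z : α, (if p z then (1:ℝ) else 0) * ((a :: t).count z : ℝ)
        = (if p z then (1:ℝ) else 0) * (t.count z : ℝ)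
          + (if z = a then (if p z then (1:ℝ) else 0) else 0) := by
      intro z
      rw [List.count_cons]
      push_cast
      rw [mul_add]
      congr 1
      by_cases hz : z = a
      · subst hz; simp
      · simp [beq_iff_eq, hz, (show ¬ a = z from fun hh => hz hh.symm)]
    rw [Finset.sum_congr rfl (fun z _ => h z), Finset.sum_add_distrib, ih,
      Finset.sum_ite_eq' Finset.univ a]
    rw [List.countP_cons]
    by_cases hp : p a <;> simp [hp]

lemma sum_count_real {α : Type*} [Fintype α] [DecidableEq α] [BEq α] [LawfulBEq α] (c : List α) :
    ∑ z : α, (c.count z : ℝ) = (c.length : ℝ) := by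
  induction c with
  | nil => simp
  | cons a t ih =>
    have h : ∀ z : α, ((a :: t).count z : ℝ)
        = (t.count z : ℝ) + (if z = a then (1:ℝ) else 0) := by
      intro z
      rw [List.count_cons]
      push_cast
      congr 1
      by_cases hz : z = a
      · subst hz; simp
      · simp [beq_iff_eq, hz, (show ¬ a = z from fun hh => hz hh.symm)]
    rw [Finset.sum_congr rfl (fun z _ => h z), Finset.sum_add_distrib, ih,
      Finset.sum_ite_eq' Finset.univ a]
    simp

lemma map_rot {α β : Type*} (f g : α → β) :
    ∀ (c : List α) (_ : List.Chain' (fun a b => g a = f b) c) (x : α) (h : c ≠ [])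
      (_ : g (c.getLast h) = f x), c.map g = c.tail.map f ++ [f x]
  | [], _, x, h, _ => absurd rfl h
  | [a], _, x, h, hx => by simp at hx ⊢; simpa using hx
  | a :: b :: t, hch, x, h, hx => by
    rw [show List.Chain' _ _ = List.IsChain _ _ from rfl, List.isChain_cons_cons] at hch
    have hrec := map_rot f g (b :: t) hch.2 x (by simp)
      (by rw [← hx]; simp [List.getLast_cons])
    simp only [List.map_cons, List.tail_cons] at hrec ⊢
    rw [hrec, hch.1]
    simp

lemma perm_map_of_cyclic {α β : Type*} (f g : α → β) (c : List α) (h : c ≠ [])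
    (hch : List.Chain' (fun a b => g a = f b) c)
    (hcl : g (c.getLast h) = f (c.head h)) : (c.map g).Perm (c.map f) := by
  obtain ⟨a, t, rfl⟩ := List.exists_cons_of_ne_nil h
  rw [map_rot f g _ hch a h (by simpa using hcl)]
  exact List.perm_append_singleton (f a) (t.map f)

section Graph
variable {q L : ℕ} {S : Finset (Fin (L + 1) → Fin q)}

/-- The multiset of suffixes of a cycle is a permutation of the multiset of prefixes. -/
lemma cycle_perm (c : List {z // z ∈ S}) (hc : IsCycle q L S c) :
    (c.map (fun z => suf q L z.1)).Perm (c.map (fun z => pre q L z.1)) := by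
  obtain ⟨hne, hch, hcl, _⟩ := hc
  exact perm_map_of_cyclic _ _ c hne hch (hcl hne)

lemma cycle_countP (c : List {z // z ∈ S}) (hc : IsCycle q L S c) (v : Fin L → Fin q) :
    c.countP (fun z => decide (suf q L z.1 = v)) = c.countP (fun z => decide (pre q L z.1 = v)) := by
  have h := (cycle_perm c hc).countP_eq (fun w => decide (w = v))
  rwa [List.countP_map, List.countP_map] at h

lemma cycle_mem_PS (c : List {z // z ∈ S}) (hc : IsCycle q L S c) :
    (fun z => (c.count z : ℝ) / (c.length : ℝ)) ∈ PS q L S := by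
  have hne := hc.1
  have hlen : (0:ℝ) < (c.length : ℝ) := by
    exact_mod_cast List.length_pos_iff.mpr hne
  refine ⟨?_, ?_, ?_⟩
  · intro v
    have h1 : ∀ z : {z // z ∈ S},
        ((if suf q L z.1 = v then (1 : ℝ) else 0) - (if pre q L z.1 = v then 1 else 0)) *
          ((c.count z : ℝ) / (c.length : ℝ))
        = ((if suf q L z.1 = v then (1 : ℝ) else 0) * (c.count z : ℝ)
            - (if pre q L z.1 = v then (1:ℝ) else 0) * (c.count z : ℝ)) / (c.length : ℝ) := by
      intro z; ring
    rw [Finset.sum_congr rfl (fun z _ => h1 z), ← Finset.sum_div, Finset.sum_sub_distrib,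
      sum_if_count (fun z : {z // z ∈ S} => suf q L z.1 = v) c,
      sum_if_count (fun z : {z // z ∈ S} => pre q L z.1 = v) c,
      cycle_countP c hc v, sub_self, zero_div]
  · rw [← Finset.sum_div, sum_count_real, div_self (ne_of_gt hlen)]
  · intro z
    exact div_nonneg (Nat.cast_nonneg _) (le_of_lt hlen)

/-- Any point of `PS` supported on a cycle equals the normalized cycle indicator. -/
lemma support_unique (c : List {z // z ∈ S}) (hc : IsCycle q L S c) (p : {z // z ∈ S} → ℝ)
    (hp : p ∈ PS q L S) (hz : ∀ z : {z // z ∈ S}, z ∉ c → p z = 0) :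
    p = fun z => (c.count z : ℝ) / (c.length : ℝ) := by
  obtain ⟨hne, hch, hcl, hnd⟩ := hc
  have hlenpos : 0 < c.length := List.length_pos_iff.mpr hne
  have hlen : (0:ℝ) < (c.length : ℝ) := by exact_mod_cast hlenpos
  have hsufnd : (c.map (fun z => suf q L z.1)).Nodup :=
    ((cycle_perm c ⟨hne, hch, hcl, hnd⟩).nodup_iff).mpr hnd
  have hpinj := List.inj_on_of_nodup_map hnd
  have hsinj := List.inj_on_of_nodup_map hsufnd
  obtain ⟨hcons, hsum, hnn⟩ := hp
  -- adjacent equal values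
  have hadj : ∀ a ∈ c, ∀ b ∈ c, suf q L a.1 = pre q L b.1 → p a = p b := by
    intro a ha b hb hab
    set v := suf q L a.1 with hv
    have h1 : ∑ z : {z // z ∈ S}, (if suf q L z.1 = v then (1:ℝ) else 0) * p z = p a := by
      rw [Finset.sum_eq_single a]
      · simp [hv]
      · intro z _ hzne
        by_cases h : suf q L z.1 = v
        · by_cases hzc : z ∈ c
          · exact absurd (hsinj hzc ha (h.trans hv)) hzne
          · simp [hz z hzc]
        · simp [h]
      · intro h; exact absurd (Finset.mem_univ a) h
    have h2 : ∑ z : {z // z ∈ S}, (if pre q L z.1 = v then (1:ℝ) else 0) * p z = p b := by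
      rw [Finset.sum_eq_single b]
      · simp [hab.symm, hv]
      · intro z _ hzne
        by_cases h : pre q L z.1 = v
        · by_cases hzc : z ∈ c
          · exact absurd (hpinj hzc hb (h.trans hab)) hzne
          · simp [hz z hzc]
        · simp [h]
      · intro h; exact absurd (Finset.mem_univ b) h
    have h3 := hcons v
    have h4 : ∀ z : {z // z ∈ S},
        ((if suf q L z.1 = v then (1 : ℝ) else 0) - (if pre q L z.1 = v then 1 else 0)) * p z
        = (if suf q L z.1 = v then (1:ℝ) else 0) * p z
          - (if pre q L z.1 = v then (1:ℝ) else 0) * p z := by intro z; ring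
    rw [Finset.sum_congr rfl (fun z _ => h4 z), Finset.sum_sub_distrib, h1, h2,
      sub_eq_zero] at h3
    exact h3
  -- p is constant along c
  have hconst : ∀ k (hk : k < c.length), p (c.get ⟨k, hk⟩) = p (c.get ⟨0, hlenpos⟩) := by
    intro k
    induction k with
    | zero => intro _; rfl
    | succ n ih =>
      intro hk
      have hn : n < c.length - 1 := by omega
      have hchain := List.isChain_iff_getElem.mp hch n (by omega)
      have heq := hadj (c.get ⟨n, by omega⟩) (c.get_mem _) (c.get ⟨n+1, hk⟩)
        (c.get_mem _) hchain
      rw [← heq]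
      exact ih (by omega)
  have hmemval : ∀ z ∈ c, p z = p (c.get ⟨0, hlenpos⟩) := by
    intro z hzc
    obtain ⟨⟨k, hk⟩, rfl⟩ := List.mem_iff_get.mp hzc
    exact hconst k hk
  -- the sum over c determines the constant
  have hndc : c.Nodup := List.Nodup.of_map _ hnd
  have hcard : c.toFinset.card = c.length := List.toFinset_card_of_nodup hndc
  have hsum2 : ∑ z ∈ c.toFinset, p z = 1 := by
    rw [← hsum]
    exact Finset.sum_subset (Finset.subset_univ _)
      (fun z _ hzc => hz z (fun hmem => hzc (List.mem_toFinset.mpr hmem)))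
  have hsum3 : ∑ z ∈ c.toFinset, p z = (c.length : ℝ) * p (c.get ⟨0, hlenpos⟩) := by
    rw [Finset.sum_congr rfl (fun z hzz => hmemval z (by simpa using hzz)),
      Finset.sum_const, hcard, nsmul_eq_mul]
  have hval : p (c.get ⟨0, hlenpos⟩) = 1 / (c.length : ℝ) := by
    rw [hsum3] at hsum2
    field_simp at hsum2 ⊢
    linarith
  funext z
  by_cases hzc : z ∈ c
  · rw [hmemval z hzc, hval, List.count_eq_one_of_mem hndc hzc]
    norm_num
  · rw [hz z hzc, List.count_eq_zero.mpr hzc]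
    norm_num

lemma exists_cycle_in_support (u : {z // z ∈ S} → ℝ) (hu : u ∈ PS q L S) :
    ∃ c : List {z // z ∈ S}, IsCycle q L S c ∧ ∀ z ∈ c, 0 < u z := by
  classical
  obtain ⟨hcons, hsum, hnn⟩ := hu
  have hstep : ∀ a : {z // z ∈ S}, 0 < u a →
      ∃ b : {z // z ∈ S}, 0 < u b ∧ suf q L a.1 = pre q L b.1 := by
    intro a ha
    set v := suf q L a.1 with hv
    have h4 : ∀ z : {z // z ∈ S},
        ((if suf q L z.1 = v then (1 : ℝ) else 0) - (if pre q L z.1 = v then 1 else 0)) * u z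
        = (if suf q L z.1 = v then (1:ℝ) else 0) * u z
          - (if pre q L z.1 = v then (1:ℝ) else 0) * u z := by intro z; ring
    have heq := hcons v
    rw [Finset.sum_congr rfl (fun z _ => h4 z), Finset.sum_sub_distrib, sub_eq_zero] at heq
    have hle : u a ≤ ∑ z : {z // z ∈ S}, (if suf q L z.1 = v then (1:ℝ) else 0) * u z := by
      have := Finset.single_le_sum
        (f := fun z : {z // z ∈ S} => (if suf q L z.1 = v then (1:ℝ) else 0) * u z)
        (fun z _ => mul_nonneg (by split <;> norm_num) (hnn z)) (Finset.mem_univ a)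
      simpa [← hv] using this
    by_contra hno
    push_neg at hno
    have hzero : ∀ z ∈ Finset.univ, (if pre q L z.1 = v then (1:ℝ) else 0) * u z ≤ 0 := by
      intro z _
      by_cases h : pre q L z.1 = v
      · have h2 : ¬ 0 < u z := fun h3 => (hno z h3) h.symm
        have h3 : u z = 0 := le_antisymm (not_lt.mp h2) (hnn z)
        simp [h3]
      · simp [h]
    have := Finset.sum_nonpos hzero
    rw [← heq] at this
    linarith
  have hstart : ∃ a : {z // z ∈ S}, 0 < u a := by
    by_contra hno
    push_neg at hno
    have := Finset.sum_nonpos (fun z (_ : z ∈ Finset.univ) => hno z)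
    rw [hsum] at this
    linarith
  obtain ⟨a₀, ha₀⟩ := hstart
  let F : {a : {z // z ∈ S} // 0 < u a} → {a : {z // z ∈ S} // 0 < u a} := fun a =>
    ⟨(hstep a.1 a.2).choose, (hstep a.1 a.2).choose_spec.1⟩
  let g : ℕ → {z // z ∈ S} := fun n => (F^[n] ⟨a₀, ha₀⟩).1
  have hgpos : ∀ n, 0 < u (g n) := fun n => (F^[n] ⟨a₀, ha₀⟩).2
  have hgstep : ∀ n, suf q L (g n).1 = pre q L (g (n+1)).1 := by
    intro n
    show suf q L (F^[n] ⟨a₀, ha₀⟩).1.1 = pre q L (F^[n+1] ⟨a₀, ha₀⟩).1.1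
    rw [Function.iterate_succ_apply']
    exact (hstep (F^[n] ⟨a₀, ha₀⟩).1 (F^[n] ⟨a₀, ha₀⟩).2).choose_spec.2
  obtain ⟨i, j, hij, hpre⟩ := Finite.exists_ne_map_eq_of_infinite (fun n => pre q L (g n).1)
  have hex : ∃ j, ∃ i, i < j ∧ pre q L (g i).1 = pre q L (g j).1 := by
    rcases lt_or_gt_of_ne hij with h | h
    · exact ⟨j, i, h, hpre⟩
    · exact ⟨i, j, h, hpre.symm⟩
  obtain ⟨i₀, hi₀lt, hi₀eq⟩ := Nat.find_spec hex
  set j₀ := Nat.find hex with hj₀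
  set n := j₀ - i₀ with hn
  have hnpos : 0 < n := by omega
  have hlen : ((List.range n).map (fun k => g (i₀ + k))).length = n := by simp
  refine ⟨(List.range n).map (fun k => g (i₀ + k)), ⟨?_, ?_, ?_, ?_⟩, ?_⟩
  · exact List.ne_nil_of_length_pos (by rw [hlen]; exact hnpos)
  · rw [show List.Chain' _ _ = List.IsChain _ _ from rfl, List.isChain_map]
    obtain ⟨m, hm⟩ := Nat.exists_eq_succ_of_ne_zero (Nat.pos_iff_ne_zero.mp hnpos)
    rw [hm, List.isChain_range_succ]
    intro k _
    have := hgstep (i₀ + k)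
    rwa [show i₀ + k + 1 = i₀ + Nat.succ k by omega] at this
  · intro h
    have hhead : ((List.range n).map (fun k => g (i₀ + k))).head h = g i₀ := by
      rw [List.head_eq_getElem, List.getElem_map]
      simp
    have hlast : ((List.range n).map (fun k => g (i₀ + k))).getLast h = g (i₀ + (n - 1)) := by
      rw [List.getLast_eq_getElem, List.getElem_map]
      congr 1
      rw [List.getElem_range]
      congr 1
      rw [hlen]
    rw [hhead, hlast]
    have h1 := hgstep (i₀ + (n - 1))
    rw [show i₀ + (n - 1) + 1 = j₀ by omega] at h1
    rw [h1, ← hi₀eq]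
  · rw [List.map_map]
    refine List.Nodup.map_on ?_ (List.nodup_range (n := n))
    intro k hk l hl hkl
    simp only [List.mem_range] at hk hl
    simp only [Function.comp] at hkl
    by_contra hne
    rcases lt_or_gt_of_ne hne with h | h
    · exact Nat.find_min hex (show i₀ + l < j₀ by omega) ⟨i₀ + k, by omega, hkl⟩
    · exact Nat.find_min hex (show i₀ + k < j₀ by omega) ⟨i₀ + l, by omega, hkl.symm⟩
  · intro z hz
    simp only [List.mem_map, List.mem_range] at hz
    obtain ⟨k, _, rfl⟩ := hz
    exact hgpos _

end Graph

/-- If `D(S)` is strongly connected, the vertex set of `P(S)` (points of the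
polytope that are not convex combinations of other points) is exactly
`{χ(C)/|C| : C a directed cycle in D(S)}`. -/
theorem vertices_PS (q L : ℕ) (S : Finset (Fin (L + 1) → Fin q))
    (hconn : ∀ a ∈ VS q L S, ∀ b ∈ VS q L S,
      Relation.ReflTransGen (step q L S) a b) :
    {u | u ∈ PS q L S ∧ u ∉ convexHull ℝ (PS q L S \ {u})} =
    {u : {z // z ∈ S} → ℝ | ∃ c : List {z // z ∈ S}, IsCycle q L S c ∧
      u = fun z => (c.count z : ℝ) / (c.length : ℝ)} := by
  classical
  ext u
  simp only [Set.mem_setOf_eq]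
  constructor
  · rintro ⟨huPS, hvert⟩
    by_contra hno
    push_neg at hno
    exfalso
    apply hvert
    obtain ⟨c, hcyc, hcpos⟩ := exists_cycle_in_support u huPS
    have hne := hcyc.1
    have hndc : c.Nodup := List.Nodup.of_map _ hcyc.2.2.2
    have hlenpos : 0 < c.length := List.length_pos_iff.mpr hne
    have hlenR : (0:ℝ) < (c.length : ℝ) := by exact_mod_cast hlenpos
    set uC : {z // z ∈ S} → ℝ := fun z => (c.count z : ℝ) / (c.length : ℝ) with huCdef
    have huC : uC ∈ PS q L S := cycle_mem_PS c hcyc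
    -- minimum of u over the cycle
    have hcne : c.toFinset.Nonempty := ⟨c.head hne, List.mem_toFinset.mpr (List.head_mem hne)⟩
    obtain ⟨z₁, hz₁, hz₁min⟩ := Finset.exists_min_image c.toFinset u hcne
    set ε := u z₁ with hεdef
    have hε : 0 < ε := hcpos z₁ (List.mem_toFinset.mp hz₁)
    have hεle : ∀ y ∈ c, ε ≤ u y := fun y hy => hz₁min y (List.mem_toFinset.mpr hy)
    set t := ε * (c.length : ℝ) with htdef
    have ht0 : 0 < t := mul_pos hε hlenR
    -- some positive coordinate off the cycle
    have hout : ∃ z₀ : {z // z ∈ S}, z₀ ∉ c ∧ 0 < u z₀ := by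
      by_contra h
      push_neg at h
      exact hno c hcyc (support_unique c hcyc u huPS
        (fun z hz => le_antisymm (h z hz) (huPS.2.2 z)))
    obtain ⟨z₀, hz₀c, hz₀pos⟩ := hout
    -- t < 1
    have hcard : c.toFinset.card = c.length := List.toFinset_card_of_nodup hndc
    have htle : t ≤ ∑ z ∈ c.toFinset, u z := by
      have h1 : ∑ _z ∈ c.toFinset, ε ≤ ∑ z ∈ c.toFinset, u z :=
        Finset.sum_le_sum (fun z hz => hεle z (List.mem_toFinset.mp hz))
      rw [Finset.sum_const, hcard, nsmul_eq_mul] at h1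
      rw [htdef, mul_comm]
      exact h1
    have hsumc : ∑ z ∈ c.toFinset, u z ≤ 1 - u z₀ := by
      have hsub : c.toFinset ⊆ Finset.univ.erase z₀ := by
        intro z hz
        exact Finset.mem_erase.mpr ⟨fun h => hz₀c (by rw [← h]; exact List.mem_toFinset.mp hz),
          Finset.mem_univ z⟩
      have h2 := Finset.sum_le_sum_of_subset_of_nonneg hsub
        (fun z _ _ => huPS.2.2 z)
      rwa [Finset.sum_erase_eq_sub (Finset.mem_univ z₀), huPS.2.1] at h2
    have ht1 : t < 1 := by linarith
    have h1t : (0:ℝ) < 1 - t := by linarith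
    have h1tne : (1:ℝ) - t ≠ 0 := ne_of_gt h1t
    -- the complementary point
    set w : {z // z ∈ S} → ℝ := fun z => (u z - t * uC z) / (1 - t) with hwdef
    have huCz : ∀ z, t * uC z = ε * (c.count z : ℝ) := by
      intro z
      rw [htdef, huCdef]
      field_simp
    have hwPS : w ∈ PS q L S := by
      refine ⟨?_, ?_, ?_⟩
      · intro v
        have hrw : ∀ z : {z // z ∈ S},
            ((if suf q L z.1 = v then (1 : ℝ) else 0) - (if pre q L z.1 = v then 1 else 0)) * w z
            = (((if suf q L z.1 = v then (1 : ℝ) else 0) - (if pre q L z.1 = v then 1 else 0)) * u z) / (1 - t)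
              - (t / (1 - t)) * (((if suf q L z.1 = v then (1 : ℝ) else 0) - (if pre q L z.1 = v then 1 else 0)) * uC z) := by
          intro z
          rw [hwdef]
          field_simp
        rw [Finset.sum_congr rfl (fun z _ => hrw z), Finset.sum_sub_distrib,
          ← Finset.sum_div, huPS.1 v, ← Finset.mul_sum, huC.1 v]
        simp
      · have hrw : ∀ z : {z // z ∈ S}, w z = u z / (1 - t) - (t / (1 - t)) * uC z := by
          intro z
          rw [hwdef]
          field_simp
        rw [Finset.sum_congr rfl (fun z _ => hrw z), Finset.sum_sub_distrib,
          ← Finset.sum_div, huPS.2.1, ← Finset.mul_sum, huC.2.1]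
        field_simp
      · intro z
        apply div_nonneg _ (le_of_lt h1t)
        rw [sub_nonneg, huCz z]
        by_cases hzc : z ∈ c
        · rw [List.count_eq_one_of_mem hndc hzc]
          simpa using hεle z hzc
        · rw [List.count_eq_zero.mpr hzc]
          simpa using huPS.2.2 z
    have hWne : w ≠ u := by
      intro h
      apply hno c hcyc
      rw [← huCdef]
      funext z
      have hz := congrFun h z
      rw [hwdef] at hz
      have hz2 : u z - t * uC z = (1 - t) * u z := by
        rw [div_eq_iff h1tne] at hz
        linarith [hz]
      have : t * uC z = t * u z := by linarith
      exact (mul_left_cancel₀ (ne_of_gt ht0) this).symm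
    have hCne : uC ≠ u := fun h => hno c hcyc h.symm
    have hcomb : u = t • uC + (1 - t) • w := by
      funext z
      simp only [Pi.add_apply, Pi.smul_apply, smul_eq_mul, hwdef]
      field_simp
      ring
    have h1 : uC ∈ PS q L S \ {u} := ⟨huC, hCne⟩
    have h2 : w ∈ PS q L S \ {u} := ⟨hwPS, hWne⟩
    have hfin : t • uC + (1 - t) • w ∈ convexHull ℝ (PS q L S \ {u}) :=
      (convex_convexHull ℝ _) (subset_convexHull ℝ _ h1) (subset_convexHull ℝ _ h2)
        (le_of_lt ht0) (le_of_lt h1t) (by ring)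
    rwa [← hcomb] at hfin
  · rintro ⟨c, hcyc, rfl⟩
    refine ⟨cycle_mem_PS c hcyc, ?_⟩
    intro hmem
    rw [convexHull_eq] at hmem
    obtain ⟨ι, tf, wgt, zf, hw0, hw1, hzs, hcm⟩ := hmem
    rw [Finset.centerMass_eq_of_sum_1 _ _ hw1] at hcm
    obtain ⟨i, hi, hwi⟩ : ∃ i ∈ tf, 0 < wgt i := by
      by_contra h
      push_neg at h
      have := Finset.sum_nonpos h
      rw [hw1] at this
      linarith
    have hzi := hzs i hi
    have hsupp : ∀ a : {z // z ∈ S}, a ∉ c → zf i a = 0 := by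
      intro a hac
      have hsum0 : ∑ j ∈ tf, wgt j * zf j a = 0 := by
        have hc := congrFun hcm a
        simp only [Finset.sum_apply, Pi.smul_apply, smul_eq_mul] at hc
        rw [hc]
        simp [List.count_eq_zero.mpr hac]
      have hterm := (Finset.sum_eq_zero_iff_of_nonneg
        (fun j hj => mul_nonneg (hw0 j hj) ((hzs j hj).1.2.2 a))).mp hsum0 i hi
      exact (mul_eq_zero.mp hterm).resolve_left (ne_of_gt hwi)
    exact hzi.2 (support_unique c hcyc (zf i) hzi.1 hsupp)
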